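/- Let (Ω, F, P, θ) be a stationary ergodic quadruple carrying σ, τ as in the context and let p ≥ 1. Then any measurable, almost surely finite Ō_p-valued random vector U satisfying U∘θ = H^p(U) P-a.s. satisfies P( U(p) ≤ σ·1_{U(1)=0} ) > 0. -/

import Mathlib

open MeasureTheory ProbabilityTheory Filter

noncomputable section

/-- Positive part `[x]⁺ = max(x,0)`. -/
def pos (x : ℝ) : ℝ := max x 0

/-- Nondecreasing rearrangement of a finite real vector. -/
def sortVec {n : ℕ} (u : Fin n → ℝ) : Fin n → ℝ := u ∘ Tuple.sort u

/-- `u` belongs to `Ō_n`: nonnegative and nondecreasing coordinates. -/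
def OSorted {n : ℕ} (u : Fin n → ℝ) : Prop := (∀ i, 0 ≤ u i) ∧ Monotone u

/-- Two-sided iterates `θ^n`, `n ∈ ℤ`, of a measurable bijection. -/
def iterZ {Ω : Type*} [MeasurableSpace Ω] (θ : Ω ≃ᵐ Ω) : ℤ → Ω → Ω
  | Int.ofNat n => (⇑θ)^[n]
  | Int.negSucc n => (⇑θ.symm)^[n + 1]

/-- The term `σ∘θ^{-k} − Σ_{i=1}^k τ∘θ^{-i}` (here `θinv = θ⁻¹`). -/
def Zterm {Ω : Type*} (θinv : Ω → Ω) (σ τ : Ω → ℝ) (k : ℕ) (ω : Ω) : ℝ :=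
  σ (θinv^[k] ω) - ∑ i ∈ Finset.Icc 1 k, τ (θinv^[i] ω)

/-- `Z_ℓ = [sup_{k ≥ ℓ} (σ∘θ^{-k} − Σ_{i=1}^k τ∘θ^{-i})]⁺`. -/
def Zfam {Ω : Type*} (θinv : Ω → Ω) (σ τ : Ω → ℝ) (ℓ : ℕ) (ω : Ω) : ℝ :=
  pos (⨆ k : {k : ℕ // ℓ ≤ k}, Zterm θinv σ τ (k : ℕ) ω)

/-- GI/GI input: the doubly infinite sequences `(σ∘θ^n)` and `(τ∘θ^n)` are
jointly independent, and each is identically distributed. -/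
def GIGI {Ω : Type*} [MeasurableSpace Ω] (μ : Measure Ω) (θ : Ω ≃ᵐ Ω) (σ τ : Ω → ℝ) : Prop :=
  iIndepFun
    (fun x : ℤ × Bool => fun ω => if x.2 then σ (iterZ θ x.1 ω) else τ (iterZ θ x.1 ω)) μ
  ∧ (∀ n : ℤ, IdentDistrib (fun ω => σ (iterZ θ n ω)) σ μ μ)
  ∧ (∀ n : ℤ, IdentDistrib (fun ω => τ (iterZ θ n ω)) τ μ μ)

/-- The distribution of `τ` has unbounded support. -/
def UnboundedSupport {Ω : Type*} [MeasurableSpace Ω] (μ : Measure Ω) (τ : Ω → ℝ) : Prop :=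
  ∀ M : ℝ, 0 < M → 0 < μ {ω | M < τ ω}

/-- The Kiefer–Wolfowitz map `G(u) = sorted [u + σe₁ − τ𝟙]⁺`. -/
def Gmap (S : ℕ) (σ τ : ℝ) (u : Fin S → ℝ) : Fin S → ℝ :=
  sortVec fun i => pos (u i + (if (i : ℕ) = 0 then σ else 0) - τ)

/-- The map `G^p` driving the J_{p+1}SW service profile. -/
def Gp (S p : ℕ) (hS : 0 < S) (σ τ : ℝ) (u : Fin S → ℝ) : Fin S → ℝ :=
  if u ⟨0, hS⟩ = 0 then Gmap S σ τ u
  else sortVec fun i => pos (u i + (if (i : ℕ) = p then σ else 0) - τ)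

/-- The map `Γ^p`. -/
def Gamma (p : ℕ) (σ τ : ℝ) (u : Fin p → ℝ) : Fin p → ℝ := fun j =>
  if h : (j : ℕ) + 1 < p then pos (u ⟨(j : ℕ) + 1, h⟩ - τ) else pos (max (u j) σ - τ)

/-- The map `Ψ^p`. -/
def Psi (p : ℕ) (σ τ : ℝ) (u : Fin p → ℝ) : Fin p → ℝ := fun j =>
  if h : (j : ℕ) + 1 < p then pos (min (max (u j) σ) (u ⟨(j : ℕ) + 1, h⟩) - τ)
  else pos (max (u j) σ - τ)

/-- The map `Φ^p` on `Ō_S` (with `1 ≤ p < S`). -/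
def Phi (S p : ℕ) (hp : p < S) (σ τ : ℝ) (u : Fin S → ℝ) : Fin S → ℝ := fun j =>
  let ind : ℝ := if 0 < u ⟨0, Nat.lt_of_le_of_lt (Nat.zero_le p) hp⟩ then u ⟨p, hp⟩ else 0
  if h : (j : ℕ) + 1 < S then
    if (j : ℕ) < p then pos (min (max (u j) σ) (u ⟨(j : ℕ) + 1, h⟩) - τ)
    else pos (min (max (u j) (σ + ind)) (u ⟨(j : ℕ) + 1, h⟩) - τ)
  else pos (max (u j) (σ + ind) - τ)

/-- The loss-system map `H^p(u) = sorted [u + σ·1_{u(1)=0}e₁ − τ𝟙]⁺`. -/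
def Hmap (p : ℕ) (hp : 0 < p) (σ τ : ℝ) (u : Fin p → ℝ) : Fin p → ℝ :=
  sortVec fun i => pos (u i + (if (i : ℕ) = 0 ∧ u ⟨0, hp⟩ = 0 then σ else 0) - τ)

end

section Helpers

open Set

private lemma sortVec_last_ge {p : ℕ} (hp : 0 < p) (v : Fin p → ℝ) (j : Fin p) :
    v j ≤ sortVec v ⟨p - 1, by omega⟩ := by
  have h1 : v j = sortVec v ((Tuple.sort v)⁻¹ j) := by
    simp [sortVec, Function.comp]
  rw [h1]
  exact Tuple.monotone_sort v (by
    rw [Fin.le_def]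
    have := ((Tuple.sort v)⁻¹ j).isLt
    simp only []
    omega)

private lemma Hmap_last {p : ℕ} (hp : 0 < p) (σ τ : ℝ) (u : Fin p → ℝ)
    (hs : OSorted u) (hσ : 0 ≤ σ)
    (hgt : (if u ⟨0, hp⟩ = 0 then σ else 0) < u ⟨p - 1, by omega⟩) :
    Hmap p hp σ τ u ⟨p - 1, by omega⟩ = pos (u ⟨p - 1, by omega⟩ - τ) := by
  set v : Fin p → ℝ :=
    fun i => pos (u i + (if (i : ℕ) = 0 ∧ u ⟨0, hp⟩ = 0 then σ else 0) - τ) with hv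
  have hupper : ∀ i, v i ≤ pos (u ⟨p - 1, by omega⟩ - τ) := by
    intro i
    have h2 : u i + (if (i : ℕ) = 0 ∧ u ⟨0, hp⟩ = 0 then σ else 0) ≤ u ⟨p - 1, by omega⟩ := by
      by_cases hc : (i : ℕ) = 0 ∧ u ⟨0, hp⟩ = 0
      · have hi0 : i = ⟨0, hp⟩ := by ext; exact hc.1
        rw [if_pos hc, hi0, hc.2]
        rw [if_pos hc.2] at hgt
        linarith
      · rw [if_neg hc, add_zero]
        exact hs.2 (by rw [Fin.le_def]; have := i.isLt; simp only []; omega)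
    exact max_le_max (by linarith) le_rfl
  have hlower : pos (u ⟨p - 1, by omega⟩ - τ) ≤ v ⟨p - 1, by omega⟩ := by
    have ha : (0:ℝ) ≤ (if ((⟨p - 1, by omega⟩ : Fin p) : ℕ) = 0 ∧ u ⟨0, hp⟩ = 0 then σ else 0) := by
      split <;> simp [hσ]
    exact max_le_max (by simp only []; linarith) le_rfl
  have hHv : Hmap p hp σ τ u = sortVec v := rfl
  rw [hHv]
  apply le_antisymm
  · obtain ⟨i, hi⟩ : ∃ i, sortVec v ⟨p - 1, by omega⟩ = v i :=
      ⟨Tuple.sort v ⟨p - 1, by omega⟩, rfl⟩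
    rw [hi]; exact hupper i
  · exact le_trans hlower (sortVec_last_ge hp v _)

private lemma ae_eq_const_of_levels {Ω : Type*} [MeasurableSpace Ω] (μ : Measure Ω)
    [IsProbabilityMeasure μ] (M : Ω → ℝ) (hM : Measurable M)
    (h01 : ∀ c : ℝ, μ {ω | M ω ≤ c} = 0 ∨ μ {ω | M ω ≤ c} = 1)
    (hbd : μ {ω | M ω ≤ -1} = 0) :
    ∃ m : ℝ, ∀ᵐ ω ∂μ, M ω = m := by
  set S : Set ℝ := {c : ℝ | μ {ω | M ω ≤ c} = 1} with hS
  have hSne : S.Nonempty := by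
    by_contra hc
    have hz : ∀ n : ℕ, μ {ω | M ω ≤ (n : ℝ)} = 0 := by
      intro n
      rcases h01 (n : ℝ) with h | h
      · exact h
      · exact absurd ⟨(n:ℝ), h⟩ hc
    have hcover : (Set.univ : Set Ω) ⊆ ⋃ n : ℕ, {ω | M ω ≤ (n : ℝ)} := by
      intro ω _
      obtain ⟨n, hn⟩ := exists_nat_ge (M ω)
      exact Set.mem_iUnion.mpr ⟨n, hn⟩
    have : μ Set.univ = 0 := by
      refine measure_mono_null hcover ?_
      exact measure_iUnion_null hz
    simp [measure_univ] at this
  have hSbd : BddBelow S := by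
    refine ⟨-1, fun c hc => ?_⟩
    by_contra hlt
    push_neg at hlt
    have : μ {ω | M ω ≤ c} = 0 :=
      measure_mono_null (fun ω h => le_trans h (le_of_lt hlt)) hbd
    simp only [hS, Set.mem_setOf_eq] at hc
    rw [this] at hc; exact one_ne_zero hc.symm
  set m := sInf S with hm
  refine ⟨m, ?_⟩
  have hub : ∀ᵐ ω ∂μ, ∀ n : ℕ, M ω ≤ m + 1 / (n + 1) := by
    rw [ae_all_iff]
    intro n
    have hlt : sInf S < m + 1 / (n + 1) := by
      rw [← hm]
      have : (0:ℝ) < 1 / (n + 1) := by positivity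
      linarith
    obtain ⟨c, hcS, hc⟩ := exists_lt_of_csInf_lt hSne hlt
    have h1 : ∀ᵐ ω ∂μ, M ω ≤ c := by
      have : μ {ω | M ω ≤ c}ᶜ = 0 := by
        have hms : MeasurableSet {ω | M ω ≤ c} := measurableSet_le hM measurable_const
        have hcS' : μ {ω | M ω ≤ c} = 1 := hcS
        rw [measure_compl hms (measure_ne_top _ _), hcS', measure_univ]
        simp
      filter_upwards [(ae_iff (p := fun ω => M ω ≤ c)).mpr this] with ω h using h
    filter_upwards [h1] with ω h using le_trans h (le_of_lt hc)
  have hlb : ∀ᵐ ω ∂μ, ∀ n : ℕ, m - 1 / (n + 1) < M ω := by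
    rw [ae_all_iff]
    intro n
    have hnot : m - 1 / (n + 1) ∉ S := by
      intro hmem
      have := csInf_le hSbd hmem
      have h2 : (0:ℝ) < 1 / (n + 1) := by positivity
      rw [← hm] at this; linarith
    have h0 : μ {ω | M ω ≤ m - 1 / (n + 1)} = 0 := by
      rcases h01 (m - 1 / (n + 1)) with h | h
      · exact h
      · exact absurd h hnot
    have : ∀ᵐ ω ∂μ, ¬ (M ω ≤ m - 1 / (n + 1)) := ae_iff.mpr (by simpa using h0)
    filter_upwards [this] with ω h using lt_of_not_ge h
  filter_upwards [hub, hlb] with ω h1 h2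
  apply le_antisymm
  · refine le_of_forall_pos_le_add fun ε hε => ?_
    obtain ⟨n, hn⟩ := exists_nat_one_div_lt hε
    calc M ω ≤ m + 1 / (n + 1) := h1 n
    _ ≤ m + ε := by push_cast at hn ⊢; linarith
  · refine le_of_forall_pos_le_add fun ε hε => ?_
    obtain ⟨n, hn⟩ := exists_nat_one_div_lt hε
    have := h2 n
    push_cast at hn this ⊢; linarith

end Helpers

theorem stmt18 {Ω : Type*} [MeasurableSpace Ω] (μ : MeasureTheory.Measure Ω)
    [MeasureTheory.IsProbabilityMeasure μ]
    (θ : Ω ≃ᵐ Ω) (hergo : Ergodic (⇑θ) μ)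
    (σ τ : Ω → ℝ) (hσint : MeasureTheory.Integrable σ μ) (hτint : MeasureTheory.Integrable τ μ)
    (hσ0 : ∀ᵐ ω ∂μ, 0 ≤ σ ω) (hτ0 : ∀ᵐ ω ∂μ, 0 < τ ω)
    (p : ℕ) (hp : 1 ≤ p)
    (U : Ω → Fin p → ℝ) (hUm : Measurable U) (hUs : ∀ᵐ ω ∂μ, OSorted (U ω))
    (hUr : ∀ᵐ ω ∂μ, U (θ ω) = Hmap p (by omega) (σ ω) (τ ω) (U ω)) :
    0 < μ {ω | U ω ⟨p - 1, by omega⟩ ≤ (if U ω ⟨0, by omega⟩ = 0 then σ ω else 0)} := by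
  by_contra hcon
  have hs0 : μ {ω | U ω ⟨p - 1, by omega⟩ ≤ (if U ω ⟨0, by omega⟩ = 0 then σ ω else 0)} = 0 :=
    le_antisymm (not_lt.mp hcon) zero_le
  have hp0 : 0 < p := hp
  set M : Ω → ℝ := fun ω => U ω ⟨p - 1, by omega⟩ with hMdef
  have hMm : Measurable M := (measurable_pi_apply _).comp hUm
  have hA : ∀ᵐ ω ∂μ, (if U ω ⟨0, by omega⟩ = 0 then σ ω else 0) < M ω := by
    rw [ae_iff]
    simpa [not_lt, hMdef] using hs0
  have hkey : ∀ᵐ ω ∂μ, M (θ ω) = pos (M ω - τ ω) ∧ 0 < M ω ∧ 0 < τ ω := by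
    filter_upwards [hUr, hUs, hσ0, hτ0, hA] with ω hr hsorted hσω hτω hAω
    have hMpos : 0 < M ω := by
      by_cases h0 : U ω ⟨0, by omega⟩ = 0
      · rw [if_pos h0] at hAω; linarith
      · rw [if_neg h0] at hAω; exact hAω
    refine ⟨?_, hMpos, hτω⟩
    have h1 : M (θ ω) = Hmap p hp0 (σ ω) (τ ω) (U ω) ⟨p - 1, by omega⟩ := by
      rw [hMdef]; simp only []; rw [hr]
    rw [h1, Hmap_last hp0 (σ ω) (τ ω) (U ω) hsorted hσω hAω]
  have h01 : ∀ c : ℝ, μ {ω | M ω ≤ c} = 0 ∨ μ {ω | M ω ≤ c} = 1 := by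
    intro c
    set A : Set Ω := {ω | M ω ≤ c} with hAdef
    have hAm : MeasurableSet A := measurableSet_le hMm measurable_const
    have hd1 : μ (A \ (⇑θ) ⁻¹' A) = 0 := by
      refine measure_mono_null ?_ (ae_iff.mp hkey)
      rintro ω ⟨hωA, hωnot⟩
      intro hgood
      obtain ⟨h1, h2, h3⟩ := hgood
      apply hωnot
      show M (θ ω) ≤ c
      have hle : M (θ ω) ≤ M ω := by
        rw [h1]
        exact max_le (by linarith) (le_of_lt h2)
      exact le_trans hle hωA
    have hpre : μ ((⇑θ) ⁻¹' A) = μ A :=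
      hergo.toMeasurePreserving.measure_preimage_emb θ.measurableEmbedding A
    have hd2 : μ ((⇑θ) ⁻¹' A \ A) = 0 := by
      have e1 : μ ((⇑θ) ⁻¹' A ∩ A) + μ ((⇑θ) ⁻¹' A \ A) = μ ((⇑θ) ⁻¹' A) :=
        measure_inter_add_diff _ hAm
      have e2 : μ (A ∩ (⇑θ) ⁻¹' A) + μ (A \ (⇑θ) ⁻¹' A) = μ A :=
        measure_inter_add_diff _ (hAm.preimage θ.measurable)
      rw [hd1, add_zero, Set.inter_comm] at e2
      rw [hpre, ← e2] at e1
      exact (ENNReal.add_right_inj (measure_ne_top μ _)).mp (by rw [e1, add_zero])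
    have haeeq : (⇑θ) ⁻¹' A =ᵐ[μ] A := MeasureTheory.ae_eq_set.mpr ⟨hd2, hd1⟩
    rcases hergo.quasiErgodic.ae_empty_or_univ₀ hAm.nullMeasurableSet haeeq with h | h
    · left; rw [measure_congr h]; simp
    · right; rw [measure_congr h]; exact measure_univ
  have hbd : μ {ω | M ω ≤ -1} = 0 := by
    refine measure_mono_null ?_ (ae_iff.mp hkey)
    intro ω hω hgood
    have h1 : M ω ≤ -1 := hω
    linarith [hgood.2.1]
  obtain ⟨m, hm⟩ := ae_eq_const_of_levels μ M hMm h01 hbd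
  have hm2 : ∀ᵐ ω ∂μ, M (θ ω) = m := by
    rw [ae_iff] at hm ⊢
    have heq : {ω | ¬ M (θ ω) = m} = (⇑θ) ⁻¹' {ω | ¬ M ω = m} := rfl
    rw [heq, hergo.toMeasurePreserving.measure_preimage_emb θ.measurableEmbedding]
    exact hm
  obtain ⟨ω, hk, hmω, hmθ⟩ := (hkey.and (hm.and hm2)).exists
  obtain ⟨h1, h2, h3⟩ := hk
  rw [hmθ, hmω] at h1
  have hmpos : 0 < m := hmω ▸ h2
  rcases max_cases (m - τ ω) (0 : ℝ) with ⟨he, _⟩ | ⟨he, _⟩ <;>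
    rw [pos, he] at h1 <;> linarith
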